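/- Define operators e_{n+1,s} x^{(β)} = −q^{Σ_{i=s+1}^{n} β_i} x^{(β−ε_s)} for 1 ≤ s ≤ n and e_{j,s} x^{(β)} = q^{Σ_{i: s<i<j} β_i}[β_j+1] x^{(β−ε_s+ε_j)} for 1 ≤ s < j ≤ n. Then e_{n+1,s} = e_{n+1,j} e_{j,s} − q^{-1} e_{j,s} e_{n+1,j} for all 1 ≤ s < j ≤ n. -/

import Mathlib

open Finset

/-- The quantum integer `[m] := (q^m - q^{-m})/(q - q^{-1})` for `m : ℤ`. -/
def qint {K : Type*} [Field K] (q : K) (m : ℤ) : K :=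
  (q ^ m - q ^ (-m)) / (q - q⁻¹)

/-- `θ(ε_k, β) = q^{Σ_{s>k} β_s - Σ_{s<k} β_s}`. -/
def thq {K : Type*} [Field K] (q : K) (n : ℕ) (β : ℕ → ℤ) (k : ℕ) : K :=
  q ^ ((∑ s ∈ Finset.Icc (k + 1) n, β s) - ∑ s ∈ Finset.Ico 1 k, β s)

/-- The `i`-th standard basis vector `ε_i`. -/
def eps (i : ℕ) : ℕ → ℤ := fun k => if k = i then 1 else 0

lemma qden_ne {K : Type*} [Field K] (q : K) (hq0 : q ≠ 0) (hq1 : q ≠ 1) (hqm : q ≠ -1) :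
    q - q⁻¹ ≠ 0 := by
  intro h
  have h2 : q * q = 1 := by
    have := sub_eq_zero.1 h
    field_simp at this
    linear_combination this
  have h3 : (q - 1) * (q + 1) = 0 := by linear_combination h2
  rcases mul_eq_zero.1 h3 with h | h
  · exact hq1 (by linear_combination h)
  · exact hqm (by linear_combination h)

lemma qint_key {K : Type*} [Field K] (q : K) (hq0 : q ≠ 0) (h2 : q - q⁻¹ ≠ 0) (m : ℤ) :
    qint q (m + 1) - q⁻¹ * qint q m = q ^ m := by
  unfold qint
  have e1 : q ^ (m + 1) = q ^ m * q := zpow_add_one₀ hq0 m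
  have e2 : q ^ (-(m + 1)) = q ^ (-m) * q⁻¹ := by
    rw [show -(m+1) = -m + -1 by ring, zpow_add₀ hq0, zpow_neg_one]
  have e3 : q ^ (-m) = (q ^ m)⁻¹ := zpow_neg q m
  have hm : q ^ m ≠ 0 := zpow_ne_zero m hq0
  rw [← mul_div_assoc, div_sub_div_same, div_eq_iff h2, e1, e2, e3]
  field_simp
  ring

lemma qint_zero {K : Type*} [Field K] (q : K) : qint q 0 = 0 := by
  simp [qint]

theorem qbracket_e_nplus1_s {K V : Type*} [Field K] [AddCommGroup V] [Module K V]
    (q : K) (hq0 : q ≠ 0) (hq1 : q ≠ 1) (hqm : q ≠ -1) (n : ℕ)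
    (X : (ℕ → ℤ) → V)
    (hX0 : ∀ β : ℕ → ℤ, (∃ k ∈ Finset.Icc 1 n, β k < 0) → X β = 0)
    (Ens : ℕ → Module.End K V) (E : ℕ → ℕ → Module.End K V)
    (hEns : ∀ s, 1 ≤ s → s ≤ n → ∀ β : ℕ → ℤ, (∀ k ∈ Finset.Icc 1 n, 0 ≤ β k) →
      Ens s (X β) = -(q ^ (∑ i ∈ Finset.Icc (s + 1) n, β i)) • X (β - eps s))
    (hE : ∀ j s, 1 ≤ s → s < j → j ≤ n → ∀ β : ℕ → ℤ, (∀ k ∈ Finset.Icc 1 n, 0 ≤ β k) →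
      E j s (X β) = (q ^ (∑ i ∈ Finset.Ioo s j, β i) * qint q (β j + 1)) •
        X (β - eps s + eps j)) :
    ∀ s j, 1 ≤ s → s < j → j ≤ n → ∀ β : ℕ → ℤ, (∀ k ∈ Finset.Icc 1 n, 0 ≤ β k) →
      Ens s (X β) = (Ens j * E j s - q⁻¹ • (E j s * Ens j)) (X β) := by
  intro s j hs hsj hjn β hβ
  have hden : q - q⁻¹ ≠ 0 := qden_ne q hq0 hq1 hqm
  have hsn : s ≤ n := le_trans hsj.le hjn
  have hj1 : 1 ≤ j := le_trans hs hsj.le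
  have hsmem : s ∈ Finset.Icc 1 n := Finset.mem_Icc.2 ⟨hs, hsn⟩
  have hjmem : j ∈ Finset.Icc 1 n := Finset.mem_Icc.2 ⟨hj1, hjn⟩
  -- sum splitting
  have hsum : (∑ i ∈ Finset.Icc (s+1) n, β i)
      = (∑ i ∈ Finset.Ioo s j, β i) + β j + ∑ i ∈ Finset.Icc (j+1) n, β i := by
    have e1 : (∑ i ∈ Finset.Ico (s+1) j, β i) + ∑ i ∈ Finset.Ico j (n+1), β i
        = ∑ i ∈ Finset.Ico (s+1) (n+1), β i :=
      Finset.sum_Ico_consecutive β (by omega) (by omega)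
    have e2 : (∑ i ∈ Finset.Ico j (j+1), β i) + ∑ i ∈ Finset.Ico (j+1) (n+1), β i
        = ∑ i ∈ Finset.Ico j (n+1), β i :=
      Finset.sum_Ico_consecutive β (by omega) (by omega)
    have e3 : (∑ i ∈ Finset.Ico j (j+1), β i) = β j := by
      rw [Nat.Ico_succ_singleton, Finset.sum_singleton]
    rw [show Finset.Icc (s+1) n = Finset.Ico (s+1) (n+1) from (Finset.Ico_add_one_right_eq_Icc _ _).symm,
      show Finset.Icc (j+1) n = Finset.Ico (j+1) (n+1) from (Finset.Ico_add_one_right_eq_Icc _ _).symm,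
      show Finset.Ioo s j = Finset.Ico (s+1) j from (Finset.Ico_add_one_left_eq_Ioo _ _).symm]
    linarith [e1, e2, e3]
  -- Term 2 computation
  have h2 : E j s (X (β - eps j)) =
      (q ^ (∑ i ∈ Finset.Ioo s j, β i) * qint q (β j)) • X (β - eps s) := by
    rcases (hβ j hjmem).lt_or_eq with hbj | hbj
    · have hnn : ∀ k ∈ Finset.Icc 1 n, 0 ≤ (β - eps j) k := by
        intro k hk
        by_cases hkj : k = j <;> simp [eps, hkj, Pi.sub_apply]
        · omega
        · exact hβ k hk
      rw [hE j s hs hsj hjn _ hnn]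
      have hfun : β - eps j - eps s + eps j = β - eps s := by ring
      have hsame : (∑ i ∈ Finset.Ioo s j, (β - eps j) i) = ∑ i ∈ Finset.Ioo s j, β i := by
        apply Finset.sum_congr rfl
        intro i hi
        have : i ≠ j := (Finset.mem_Ioo.1 hi).2.ne
        simp [eps, this]
      have hval : (β - eps j) j + 1 = β j := by simp [eps]
      rw [hfun, hsame, hval]
    · have : X (β - eps j) = 0 := by
        apply hX0
        exact ⟨j, hjmem, by simp [eps, ← hbj]⟩
      rw [this, map_zero, ← hbj, qint_zero, mul_zero, zero_smul]
  -- Term 1 computation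
  have h1 : Ens j (X (β - eps s + eps j)) =
      -(q ^ (∑ i ∈ Finset.Icc (j+1) n, β i)) • X (β - eps s) := by
    rcases (hβ s hsmem).lt_or_eq with hbs | hbs
    · have hnn : ∀ k ∈ Finset.Icc 1 n, 0 ≤ (β - eps s + eps j) k := by
        intro k hk
        by_cases hks : k = s
        · simp [eps, hks, hsj.ne]
          omega
        · by_cases hkj : k = j <;> simp [eps, hks, hkj]
          · have := hβ j hjmem; omega
          · exact hβ k hk
      rw [hEns j hj1 hjn _ hnn]
      have hfun : β - eps s + eps j - eps j = β - eps s := by ring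
      have hsame : (∑ i ∈ Finset.Icc (j+1) n, (β - eps s + eps j) i)
          = ∑ i ∈ Finset.Icc (j+1) n, β i := by
        apply Finset.sum_congr rfl
        intro i hi
        have h1 : i ≠ j := by have := (Finset.mem_Icc.1 hi).1; omega
        have h2 : i ≠ s := by have := (Finset.mem_Icc.1 hi).1; omega
        simp [eps, h1, h2]
      rw [hfun, hsame]
    · have hz1 : X (β - eps s + eps j) = 0 := by
        apply hX0
        exact ⟨s, hsmem, by simp [eps, hsj.ne, ← hbs]⟩
      have hz2 : X (β - eps s) = 0 := by
        apply hX0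
        exact ⟨s, hsmem, by simp [eps, ← hbs]⟩
      rw [hz1, hz2, map_zero, smul_zero]
  -- main computation
  simp only [LinearMap.sub_apply, LinearMap.smul_apply, Module.End.mul_apply]
  rw [hE j s hs hsj hjn β hβ, hEns s hs hsn β hβ, map_smul, h1,
    hEns j hj1 hjn β hβ, map_smul, h2, smul_smul, smul_smul, smul_smul,
    ← sub_smul]
  congr 1
  rw [hsum, zpow_add₀ hq0, zpow_add₀ hq0, ← qint_key q hq0 hden (β j)]
  ring
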